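/- Under the stated hypotheses, the second derivative with respect to x of the composition x ↦ G(x, φ(x)) never vanishes: there is no x in the domain of φ with d²/dx² G(x, φ(x)) = (0,0). -/

import Mathlib

/-- First derivative of one component. -/
lemma aux_first_deriv (a b q1 q0 d1 d0 pA pB : ℝ) (s : ℝ) (hs : d1 * s + d0 ≠ 0) :
    HasDerivAt (fun t : ℝ => a * (t - pA) ^ 2 + b * (-((q1 * t + q0) / (d1 * t + d0)) - pB) ^ 2)
      (2 * a * (s - pA) +
        2 * b * (-((q1 * s + q0) / (d1 * s + d0)) - pB) * ((q0 * d1 - q1 * d0) / (d1 * s + d0) ^ 2))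
      s := by
  have hden : HasDerivAt (fun t : ℝ => d1 * t + d0) d1 s := by
    simpa using ((hasDerivAt_id s).const_mul d1).add_const d0
  have hnum : HasDerivAt (fun t : ℝ => q1 * t + q0) q1 s := by
    simpa using ((hasDerivAt_id s).const_mul q1).add_const q0
  have hin := (hnum.div hden hs).neg.sub_const pB
  have hsq := (hin.pow 2).const_mul b
  have ht1 := ((((hasDerivAt_id s).sub_const pA).pow 2).const_mul a)
  have h := ht1.add hsq
  refine h.congr_deriv ?_
  have h2 : (s - pA) ^ (2 - 1) = s - pA := by norm_num
  simp only [id, Pi.neg_apply, Pi.div_apply]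
  field_simp
  ring

/-- Second derivative of one component. -/
lemma aux_second_deriv (a b q1 q0 d1 d0 pA pB : ℝ) (s : ℝ) (hs : d1 * s + d0 ≠ 0) :
    HasDerivAt (fun t : ℝ => 2 * a * (t - pA) +
        2 * b * (-((q1 * t + q0) / (d1 * t + d0)) - pB) * ((q0 * d1 - q1 * d0) / (d1 * t + d0) ^ 2))
      (2 * a + 2 * b * (((q0 * d1 - q1 * d0) / (d1 * s + d0) ^ 2) ^ 2 +
        (-((q1 * s + q0) / (d1 * s + d0)) - pB) *
          (-(2 * (q0 * d1 - q1 * d0) * d1) / (d1 * s + d0) ^ 3)))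
      s := by
  have hden : HasDerivAt (fun t : ℝ => d1 * t + d0) d1 s := by
    simpa using ((hasDerivAt_id s).const_mul d1).add_const d0
  have hnum : HasDerivAt (fun t : ℝ => q1 * t + q0) q1 s := by
    simpa using ((hasDerivAt_id s).const_mul q1).add_const q0
  have hu := (hnum.div hden hs).neg.sub_const pB
  have hv := (hasDerivAt_const s (q0 * d1 - q1 * d0)).div (hden.pow 2)
      (pow_ne_zero 2 hs)
  have ht2 := (hu.mul hv).const_mul (2 * b)
  have ht1 := ((hasDerivAt_id s).sub_const pA).const_mul (2 * a)
  have h := ht1.add ht2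
  have hshape : HasDerivAt (fun t : ℝ => 2 * a * (t - pA) +
      2 * b * ((-((q1 * t + q0) / (d1 * t + d0)) - pB) *
        ((q0 * d1 - q1 * d0) / (d1 * t + d0) ^ 2))) _ s := h
  convert hshape using 1
  · funext t; ring
  · have h2 : ((d1 * s + d0) ^ 2) ^ 2 = (d1 * s + d0) ^ 4 := by ring
    norm_num [h2]
    field_simp
    ring_nf
    tauto

/-- The second derivative of `x ↦ G(x, φ(x))` never vanishes on the domain of `φ`. -/
theorem second_derivative_never_vanishes
    (a00 a01 a10 a11 p00 p01 p10 p11 : ℝ)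
    (h00 : a00 ≠ 0) (h01 : a01 ≠ 0) (h10 : a10 ≠ 0) (h11 : a11 ≠ 0)
    (hdet : a00 * a11 - a01 * a10 ≠ 0) (hp0 : p00 ≠ p10) (hp1 : p01 ≠ p11)
    (φ : ℝ → ℝ)
    (hφ : ∀ x : ℝ, φ x =
      -(((-(a00 * a11 * p11) + a01 * a10 * p01) * x +
          (a00 * a11 * p00 * p11 - a01 * a10 * p01 * p10)) /
        ((a00 * a11 - a01 * a10) * x + (-(a00 * a11 * p00) + a01 * a10 * p10)))) :
    ∀ x : ℝ, (a00 * a11 - a01 * a10) * x + (-(a00 * a11 * p00) + a01 * a10 * p10) ≠ 0 →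
      deriv (deriv (fun s : ℝ =>
          ((a00 * (s - p00) ^ 2 + a01 * (φ s - p01) ^ 2,
            a10 * (s - p10) ^ 2 + a11 * (φ s - p11) ^ 2) : ℝ × ℝ))) x ≠ 0 := by
  have hφf : φ = fun t : ℝ =>
      -(((-(a00 * a11 * p11) + a01 * a10 * p01) * t +
          (a00 * a11 * p00 * p11 - a01 * a10 * p01 * p10)) /
        ((a00 * a11 - a01 * a10) * t + (-(a00 * a11 * p00) + a01 * a10 * p10))) := funext hφ
  subst hφf
  intro x hx
  -- abbreviate coefficients
  have hev : ∀ᶠ s in nhds x,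
      (a00 * a11 - a01 * a10) * s + (-(a00 * a11 * p00) + a01 * a10 * p10) ≠ 0 := by
    have hc : Continuous fun s : ℝ =>
        (a00 * a11 - a01 * a10) * s + (-(a00 * a11 * p00) + a01 * a10 * p10) := by continuity
    exact hc.continuousAt.eventually_ne hx
  set q1 : ℝ := -(a00 * a11 * p11) + a01 * a10 * p01 with hq1
  set q0 : ℝ := a00 * a11 * p00 * p11 - a01 * a10 * p01 * p10 with hq0
  set d1 : ℝ := a00 * a11 - a01 * a10 with hd1
  set d0 : ℝ := -(a00 * a11 * p00) + a01 * a10 * p10 with hd0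
  have hderiv_eq : deriv (fun s : ℝ =>
      ((a00 * (s - p00) ^ 2 + a01 * (-((q1 * s + q0) / (d1 * s + d0)) - p01) ^ 2,
        a10 * (s - p10) ^ 2 + a11 * (-((q1 * s + q0) / (d1 * s + d0)) - p11) ^ 2) : ℝ × ℝ))
      =ᶠ[nhds x] fun s : ℝ =>
      ((2 * a00 * (s - p00) +
          2 * a01 * (-((q1 * s + q0) / (d1 * s + d0)) - p01) *
            ((q0 * d1 - q1 * d0) / (d1 * s + d0) ^ 2),
        2 * a10 * (s - p10) +
          2 * a11 * (-((q1 * s + q0) / (d1 * s + d0)) - p11) *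
            ((q0 * d1 - q1 * d0) / (d1 * s + d0) ^ 2)) : ℝ × ℝ) := by
    filter_upwards [hev] with s hs
    exact ((aux_first_deriv a00 a01 q1 q0 d1 d0 p00 p01 s hs).prodMk
      (aux_first_deriv a10 a11 q1 q0 d1 d0 p10 p11 s hs)).deriv
  have h2 := ((aux_second_deriv a00 a01 q1 q0 d1 d0 p00 p01 x hx).prodMk
      (aux_second_deriv a10 a11 q1 q0 d1 d0 p10 p11 x hx))
  rw [hderiv_eq.deriv_eq, h2.deriv]
  -- the two components cannot both vanish
  set c1 : ℝ := 2 * a00 + 2 * a01 * (((q0 * d1 - q1 * d0) / (d1 * x + d0) ^ 2) ^ 2 +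
      (-((q1 * x + q0) / (d1 * x + d0)) - p01) *
        (-(2 * (q0 * d1 - q1 * d0) * d1) / (d1 * x + d0) ^ 3)) with hc1
  set c2 : ℝ := 2 * a10 + 2 * a11 * (((q0 * d1 - q1 * d0) / (d1 * x + d0) ^ 2) ^ 2 +
      (-((q1 * x + q0) / (d1 * x + d0)) - p11) *
        (-(2 * (q0 * d1 - q1 * d0) * d1) / (d1 * x + d0) ^ 3)) with hc2
  have hcomb : a10 * c1 - a00 * c2 =
      -6 * (a00 * a01 * a10 * a11) ^ 2 * (p01 - p11) ^ 2 * (p10 - p00) ^ 2 *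
        (a00 * a11 - a01 * a10) / ((d1 * x + d0) ^ 4) := by
    rw [hc1, hc2, hq1, hq0, hd1, hd0]
    have hx' : (a00 * a11 - a01 * a10) * x + (-(a00 * a11 * p00) + a01 * a10 * p10) ≠ 0 := hx
    simp only [← neg_div, div_sub' hx']
    field_simp
    ring
  have hne : a10 * c1 - a00 * c2 ≠ 0 := by
    rw [hcomb]
    apply div_ne_zero _ (pow_ne_zero 4 hx)
    have hq : p01 - p11 ≠ 0 := sub_ne_zero.mpr hp1
    have hr : p10 - p00 ≠ 0 := sub_ne_zero.mpr (Ne.symm hp0)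
    have hprod : a00 * a01 * a10 * a11 ≠ 0 :=
      mul_ne_zero (mul_ne_zero (mul_ne_zero h00 h01) h10) h11
    positivity
  intro h0
  have hA : c1 = 0 := congrArg Prod.fst h0
  have hB : c2 = 0 := congrArg Prod.snd h0
  apply hne
  rw [hA, hB]
  ring
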